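/- For all n ≥ 0, c_1³·α^n + c_2³·β^n + c_3³·γ^n + c_4³·δ^n = (1/563)·U_n, where U_n is the Tetranacci-type sequence with U_0 = 15, U_1 = 27, U_2 = 48, U_3 = 107 and U_n = U_{n−1} + U_{n−2} + U_{n−3} + U_{n−4} for n ≥ 4. -/
import Mathlib


/-- A Tetranacci-type sequence. -/
def seqU : ℕ → ℤ
  | 0 => 15
  | 1 => 27
  | 2 => 48
  | 3 => 107
  | n + 4 => seqU (n + 3) + seqU (n + 2) + seqU (n + 1) + seqU n

theorem tetra_c_cube (α β γ δ : ℂ)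
    (hα : α ^ 4 - α ^ 3 - α ^ 2 - α - 1 = 0) (hβ : β ^ 4 - β ^ 3 - β ^ 2 - β - 1 = 0)
    (hγ : γ ^ 4 - γ ^ 3 - γ ^ 2 - γ - 1 = 0) (hδ : δ ^ 4 - δ ^ 3 - δ ^ 2 - δ - 1 = 0)
    (hαβ : α ≠ β) (hαγ : α ≠ γ) (hαδ : α ≠ δ) (hβγ : β ≠ γ) (hβδ : β ≠ δ) (hγδ : γ ≠ δ)
    (c₁ c₂ c₃ c₄ : ℂ)
    (hc₁ : c₁ = α ^ 2 / ((α - β) * (α - γ) * (α - δ)))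
    (hc₂ : c₂ = β ^ 2 / ((β - α) * (β - γ) * (β - δ)))
    (hc₃ : c₃ = γ ^ 2 / ((γ - α) * (γ - β) * (γ - δ)))
    (hc₄ : c₄ = δ ^ 2 / ((δ - α) * (δ - β) * (δ - γ))) (n : ℕ) :
    c₁ ^ 3 * α ^ n + c₂ ^ 3 * β ^ n + c₃ ^ 3 * γ ^ n + c₄ ^ 3 * δ ^ n
      = (1 / 563 : ℂ) * seqU n := by
  have sαβ : α - β ≠ 0 := sub_ne_zero.mpr hαβ
  have sαγ : α - γ ≠ 0 := sub_ne_zero.mpr hαγ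
  have sαδ : α - δ ≠ 0 := sub_ne_zero.mpr hαδ
  have sβγ : β - γ ≠ 0 := sub_ne_zero.mpr hβγ
  have sβδ : β - δ ≠ 0 := sub_ne_zero.mpr hβδ
  have sγδ : γ - δ ≠ 0 := sub_ne_zero.mpr hγδ
  -- divided differences
  have hAαβ : α^3 + α^2*β + α*β^2 + β^3 - α^2 - α*β - β^2 - α - β - 1 = 0 := by
    have h : (α - β) * (α^3 + α^2*β + α*β^2 + β^3 - α^2 - α*β - β^2 - α - β - 1) = 0 := by
      linear_combination hα - hβ
    exact (mul_eq_zero.mp h).resolve_left sαβ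
  have hAαγ : α^3 + α^2*γ + α*γ^2 + γ^3 - α^2 - α*γ - γ^2 - α - γ - 1 = 0 := by
    have h : (α - γ) * (α^3 + α^2*γ + α*γ^2 + γ^3 - α^2 - α*γ - γ^2 - α - γ - 1) = 0 := by
      linear_combination hα - hγ
    exact (mul_eq_zero.mp h).resolve_left sαγ
  have hAαδ : α^3 + α^2*δ + α*δ^2 + δ^3 - α^2 - α*δ - δ^2 - α - δ - 1 = 0 := by
    have h : (α - δ) * (α^3 + α^2*δ + α*δ^2 + δ^3 - α^2 - α*δ - δ^2 - α - δ - 1) = 0 := by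
      linear_combination hα - hδ
    exact (mul_eq_zero.mp h).resolve_left sαδ
  have hBαβγ : α^2 + β^2 + γ^2 + α*β + α*γ + β*γ - α - β - γ - 1 = 0 := by
    have h : (β - γ) * (α^2 + β^2 + γ^2 + α*β + α*γ + β*γ - α - β - γ - 1) = 0 := by
      linear_combination hAαβ - hAαγ
    exact (mul_eq_zero.mp h).resolve_left sβγ
  have hBαβδ : α^2 + β^2 + δ^2 + α*β + α*δ + β*δ - α - β - δ - 1 = 0 := by
    have h : (β - δ) * (α^2 + β^2 + δ^2 + α*β + α*δ + β*δ - α - β - δ - 1) = 0 := by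
      linear_combination hAαβ - hAαδ
    exact (mul_eq_zero.mp h).resolve_left sβδ
  -- elementary symmetric functions
  have hE1 : α + β + γ + δ = 1 := by
    have h : (γ - δ) * (α + β + γ + δ - 1) = 0 := by
      linear_combination hBαβγ - hBαβδ
    have h2 := (mul_eq_zero.mp h).resolve_left sγδ
    linear_combination h2
  have hE2 : α*β + α*γ + α*δ + β*γ + β*δ + γ*δ = -1 := by
    linear_combination (-1 : ℂ) * hBαβγ + (α + β + γ) * hE1
  have hE3 : α*β*γ + α*β*δ + α*γ*δ + β*γ*δ = 1 := by
    linear_combination hAαβ + (α + β) * hE2 + (α*β - (α+β)^2) * hE1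
  -- power sums
  have hp2 : α^2 + β^2 + γ^2 + δ^2 = 3 := by
    linear_combination (α + β + γ + δ + 1) * hE1 - 2 * hE2
  have hp3 : α^3 + β^3 + γ^3 + δ^3 = 7 := by
    linear_combination ((α+β+γ+δ)^2 + (α+β+γ+δ) + 4) * hE1 - 3*(α+β+γ+δ) * hE2 + 3 * hE3
  -- the denominators equal p'(root)
  have hD₁ : (α - β) * (α - γ) * (α - δ) = 4*α^3 - 3*α^2 - 2*α - 1 := by
    linear_combination (-3*α^2) * hE1 + (2*α) * hE2 - hE3
  have hD₂ : (β - α) * (β - γ) * (β - δ) = 4*β^3 - 3*β^2 - 2*β - 1 := by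
    linear_combination (-3*β^2) * hE1 + (2*β) * hE2 - hE3
  have hD₃ : (γ - α) * (γ - β) * (γ - δ) = 4*γ^3 - 3*γ^2 - 2*γ - 1 := by
    linear_combination (-3*γ^2) * hE1 + (2*γ) * hE2 - hE3
  have hD₄ : (δ - α) * (δ - β) * (δ - γ) = 4*δ^3 - 3*δ^2 - 2*δ - 1 := by
    linear_combination (-3*δ^2) * hE1 + (2*δ) * hE2 - hE3
  -- 563 * cᵢ = H(rootᵢ) with H(x) = 86x³ - 61x² - 71x - 87
  have hDne₁ : (α - β) * (α - γ) * (α - δ) ≠ 0 := by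
    exact mul_ne_zero (mul_ne_zero sαβ sαγ) sαδ
  have hDne₂ : (β - α) * (β - γ) * (β - δ) ≠ 0 := by
    exact mul_ne_zero (mul_ne_zero (sub_ne_zero.mpr hαβ.symm) sβγ) sβδ
  have hDne₃ : (γ - α) * (γ - β) * (γ - δ) ≠ 0 := by
    exact mul_ne_zero (mul_ne_zero (sub_ne_zero.mpr hαγ.symm) (sub_ne_zero.mpr hβγ.symm)) sγδ
  have hDne₄ : (δ - α) * (δ - β) * (δ - γ) ≠ 0 := by
    exact mul_ne_zero (mul_ne_zero (sub_ne_zero.mpr hαδ.symm) (sub_ne_zero.mpr hβδ.symm))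
      (sub_ne_zero.mpr hγδ.symm)
  have hm₁ : c₁ * ((α - β) * (α - γ) * (α - δ)) = α ^ 2 := by
    rw [hc₁]; field_simp
  have hm₂ : c₂ * ((β - α) * (β - γ) * (β - δ)) = β ^ 2 := by
    rw [hc₂]; field_simp
  have hm₃ : c₃ * ((γ - α) * (γ - β) * (γ - δ)) = γ ^ 2 := by
    rw [hc₃]; field_simp
  have hm₄ : c₄ * ((δ - α) * (δ - β) * (δ - γ)) = δ ^ 2 := by
    rw [hc₄]; field_simp
  have hH₁ : 563 * c₁ = 86*α^3 - 61*α^2 - 71*α - 87 := by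
    apply mul_right_cancel₀ hDne₁
    linear_combination 563 * hm₁ - (86*α^3 - 61*α^2 - 71*α - 87) * hD₁ - (344*α^2 - 158*α - 87) * hα
  have hH₂ : 563 * c₂ = 86*β^3 - 61*β^2 - 71*β - 87 := by
    apply mul_right_cancel₀ hDne₂
    linear_combination 563 * hm₂ - (86*β^3 - 61*β^2 - 71*β - 87) * hD₂ - (344*β^2 - 158*β - 87) * hβ
  have hH₃ : 563 * c₃ = 86*γ^3 - 61*γ^2 - 71*γ - 87 := by
    apply mul_right_cancel₀ hDne₃
    linear_combination 563 * hm₃ - (86*γ^3 - 61*γ^2 - 71*γ - 87) * hD₃ - (344*γ^2 - 158*γ - 87) * hγ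
  have hH₄ : 563 * c₄ = 86*δ^3 - 61*δ^2 - 71*δ - 87 := by
    apply mul_right_cancel₀ hDne₄
    linear_combination 563 * hm₄ - (86*δ^3 - 61*δ^2 - 71*δ - 87) * hD₄ - (344*δ^2 - 158*δ - 87) * hδ
  -- the key identity for H(root)³ * root^m
  have key : ∀ m : ℕ,
      ((86*α^3 - 61*α^2 - 71*α - 87)^3 * α^m + (86*β^3 - 61*β^2 - 71*β - 87)^3 * β^m
        + (86*γ^3 - 61*γ^2 - 71*γ - 87)^3 * γ^m + (86*δ^3 - 61*δ^2 - 71*δ - 87)^3 * δ^m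
        = 563^2 * (seqU m : ℂ))
      ∧ ((86*α^3 - 61*α^2 - 71*α - 87)^3 * α^(m+1) + (86*β^3 - 61*β^2 - 71*β - 87)^3 * β^(m+1)
        + (86*γ^3 - 61*γ^2 - 71*γ - 87)^3 * γ^(m+1) + (86*δ^3 - 61*δ^2 - 71*δ - 87)^3 * δ^(m+1)
        = 563^2 * (seqU (m+1) : ℂ))
      ∧ ((86*α^3 - 61*α^2 - 71*α - 87)^3 * α^(m+2) + (86*β^3 - 61*β^2 - 71*β - 87)^3 * β^(m+2)
        + (86*γ^3 - 61*γ^2 - 71*γ - 87)^3 * γ^(m+2) + (86*δ^3 - 61*δ^2 - 71*δ - 87)^3 * δ^(m+2)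
        = 563^2 * (seqU (m+2) : ℂ))
      ∧ ((86*α^3 - 61*α^2 - 71*α - 87)^3 * α^(m+3) + (86*β^3 - 61*β^2 - 71*β - 87)^3 * β^(m+3)
        + (86*γ^3 - 61*γ^2 - 71*γ - 87)^3 * γ^(m+3) + (86*δ^3 - 61*δ^2 - 71*δ - 87)^3 * δ^(m+3)
        = 563^2 * (seqU (m+3) : ℂ)) := by
    intro m
    induction m with
    | zero =>
      refine ⟨?_, ?_, ?_, ?_⟩
      · show _ = 563^2 * ((seqU 0 : ℤ) : ℂ)
        norm_num [seqU]
        linear_combination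
          (636056*α^5 - 717412*α^4 - 696686*α^3 - 700583*α^2 + 1767792*α + 946759) * hα
          + (636056*β^5 - 717412*β^4 - 696686*β^3 - 700583*β^2 + 1767792*β + 946759) * hβ
          + (636056*γ^5 - 717412*γ^4 - 696686*γ^3 - 700583*γ^2 + 1767792*γ + 946759) * hγ
          + (636056*δ^5 - 717412*δ^4 - 696686*δ^3 - 700583*δ^2 + 1767792*δ + 946759) * hδ
          + 651391 * hp3 - 686860 * hp2 + 1102354 * hE1
      · show _ = 563^2 * ((seqU 1 : ℤ) : ℂ)
        norm_num [seqU]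
        linear_combination
          (636056*α^6 - 717412*α^5 - 696686*α^4 - 700583*α^3 + 1767792*α^2 + 946759*α + 651391) * hα
          + (636056*β^6 - 717412*β^5 - 696686*β^4 - 700583*β^3 + 1767792*β^2 + 946759*β + 651391) * hβ
          + (636056*γ^6 - 717412*γ^5 - 696686*γ^4 - 700583*γ^3 + 1767792*γ^2 + 946759*γ + 651391) * hγ
          + (636056*δ^6 - 717412*δ^5 - 696686*δ^4 - 700583*δ^3 + 1767792*δ^2 + 946759*δ + 651391) * hδ
          - 35469 * hp3 + 1753745 * hp2 + 939647 * hE1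
      · show _ = 563^2 * ((seqU 2 : ℤ) : ℂ)
        norm_num [seqU]
        linear_combination
          (636056*α^7 - 717412*α^6 - 696686*α^5 - 700583*α^4 + 1767792*α^3 + 946759*α^2 + 651391*α - 35469) * hα
          + (636056*β^7 - 717412*β^6 - 696686*β^5 - 700583*β^4 + 1767792*β^3 + 946759*β^2 + 651391*β - 35469) * hβ
          + (636056*γ^7 - 717412*γ^6 - 696686*γ^5 - 700583*γ^4 + 1767792*γ^3 + 946759*γ^2 + 651391*γ - 35469) * hγ
          + (636056*δ^7 - 717412*δ^6 - 696686*δ^5 - 700583*δ^4 + 1767792*δ^3 + 946759*δ^2 + 651391*δ - 35469) * hδ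
          + 1718276 * hp3 + 904178 * hp2 + 615922 * hE1
      · show _ = 563^2 * ((seqU 3 : ℤ) : ℂ)
        norm_num [seqU]
        linear_combination
          (636056*α^8 - 717412*α^7 - 696686*α^6 - 700583*α^5 + 1767792*α^4 + 946759*α^3 + 651391*α^2 - 35469*α + 1718276) * hα
          + (636056*β^8 - 717412*β^7 - 696686*β^6 - 700583*β^5 + 1767792*β^4 + 946759*β^3 + 651391*β^2 - 35469*β + 1718276) * hβ
          + (636056*γ^8 - 717412*γ^7 - 696686*γ^6 - 700583*γ^5 + 1767792*γ^4 + 946759*γ^3 + 651391*γ^2 - 35469*γ + 1718276) * hγ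
          + (636056*δ^8 - 717412*δ^7 - 696686*δ^6 - 700583*δ^5 + 1767792*δ^4 + 946759*δ^3 + 651391*δ^2 - 35469*δ + 1718276) * hδ
          + 2622454 * hp3 + 2334198 * hp2 + 1682807 * hE1
    | succ k ih =>
      obtain ⟨h0, h1, h2, h3⟩ := ih
      refine ⟨h1, h2, h3, ?_⟩
      have hU : seqU (k + 4) = seqU (k + 3) + seqU (k + 2) + seqU (k + 1) + seqU k := rfl
      have : (k + 1) + 3 = k + 4 := by ring
      rw [this, hU]
      push_cast
      linear_combination h0 + h1 + h2 + h3
        + ((86*α^3 - 61*α^2 - 71*α - 87)^3 * α^k) * hα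
        + ((86*β^3 - 61*β^2 - 71*β - 87)^3 * β^k) * hβ
        + ((86*γ^3 - 61*γ^2 - 71*γ - 87)^3 * γ^k) * hγ
        + ((86*δ^3 - 61*δ^2 - 71*δ - 87)^3 * δ^k) * hδ
  -- finish
  have hc1' : c₁ = (86*α^3 - 61*α^2 - 71*α - 87) / 563 := by linear_combination hH₁ / 563
  have hc2' : c₂ = (86*β^3 - 61*β^2 - 71*β - 87) / 563 := by linear_combination hH₂ / 563
  have hc3' : c₃ = (86*γ^3 - 61*γ^2 - 71*γ - 87) / 563 := by linear_combination hH₃ / 563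
  have hc4' : c₄ = (86*δ^3 - 61*δ^2 - 71*δ - 87) / 563 := by linear_combination hH₄ / 563
  rw [hc1', hc2', hc3', hc4']
  linear_combination (1 / 563^3 : ℂ) * (key n).1
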